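/- If the stack-depth distribution s is non-increasing (s(j) ≥ s(j+1) for all j), then LRU is an optimal eviction policy for every finite horizon τ ≥ 1 and any initial buffer content; moreover, for every critical pair y ≤_c z of states, the optimal expected miss counts satisfy J*_τ(y) ≤ J*_τ(z). -/

import Mathlib

/-- `R_d(x)`: unit right cyclic shift of the prefix of length `d` of the state `x`. -/
def rotd (d : ℕ) (x : ℕ → Bool) : ℕ → Bool :=
  fun j => if j = 1 then x d else if j ≤ d then x (j - 1) else x j

/-- One LRU transition on access depth `d`: rotate; on a miss the accessed item
enters position 1 and the deepest buffered item is evicted. -/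
def lruStep (V d : ℕ) (x : ℕ → Bool) : ℕ → Bool :=
  let y := rotd d x
  if x d then y
  else fun j =>
    if j = 1 then true
    else if j = (WithBot.unbotD 0 ((Finset.Icc 2 V).filter fun i => y i = true).max) then false
    else y j

/-- State reached after a miss at depth `d` when the (buffered) item at post-rotation
depth `j` is evicted. -/
def evictState (d j : ℕ) (x : ℕ → Bool) : ℕ → Bool :=
  fun i => if i = 1 then true else if i = j then false else rotd d x i

/-- Optimal expected number of misses over horizon `τ` from state `x`
(stack depths i.i.d. with distribution `s`; cost 1 on a miss; upon a miss any
buffered item may be evicted). -/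
noncomputable def Jopt (V : ℕ) (s : ℕ → ℝ) : ℕ → (ℕ → Bool) → ℝ
  | 0, _ => 0
  | τ + 1, x => ∑ d ∈ Finset.Icc 1 V, s d *
      (if x d then Jopt V s τ (rotd d x)
       else 1 + sInf {c : ℝ | ∃ j, 2 ≤ j ∧ j ≤ V ∧ rotd d x j = true ∧
          c = Jopt V s τ (evictState d j x)})

/-- Expected number of misses over horizon `τ` from state `x` under the LRU policy. -/
noncomputable def Jlru (V : ℕ) (s : ℕ → ℝ) : ℕ → (ℕ → Bool) → ℝ
  | 0, _ => 0
  | τ + 1, x => ∑ d ∈ Finset.Icc 1 V, s d *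
      ((if x d then 0 else 1) + Jlru V s τ (lruStep V d x))

/-- Critical pair `y <_c z`. -/
def CritPair (V : ℕ) (y z : ℕ → Bool) : Prop :=
  ∃ p q, 2 ≤ p ∧ p < q ∧ q ≤ V ∧
    y 1 = true ∧ z 1 = true ∧
    y p = true ∧ y q = false ∧ z p = false ∧ z q = true ∧
    (∀ r, r ≠ p → r ≠ q → y r = z r) ∧
    (∀ r, q < r → y r = false)

lemma rotd_one (d : ℕ) (x : ℕ → Bool) : rotd d x 1 = x d := by simp [rotd]

lemma rotd_mid {j d : ℕ} (h1 : j ≠ 1) (h2 : j ≤ d) (x : ℕ → Bool) :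
    rotd d x j = x (j - 1) := by simp [rotd, h1, h2]

lemma rotd_high {j d : ℕ} (hd : 1 ≤ d) (h : d < j) (x : ℕ → Bool) : rotd d x j = x j := by
  have h1 : j ≠ 1 := by omega
  simp [rotd, h1, Nat.not_le.mpr h]

lemma evict_one (d j : ℕ) (x : ℕ → Bool) : evictState d j x 1 = true := by simp [evictState]

lemma evict_self {j : ℕ} (h : j ≠ 1) (d : ℕ) (x : ℕ → Bool) : evictState d j x j = false := by
  simp [evictState, h]

lemma evict_other {i j : ℕ} (h1 : i ≠ 1) (h2 : i ≠ j) (d : ℕ) (x : ℕ → Bool) :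
    evictState d j x i = rotd d x i := by simp [evictState, h1, h2]

lemma jopt_nonneg (V : ℕ) (s : ℕ → ℝ) (hs : ∀ i, 0 ≤ s i) :
    ∀ τ x, 0 ≤ Jopt V s τ x := by
  intro τ
  induction τ with
  | zero => intro x; simp [Jopt]
  | succ τ ih =>
    intro x
    rw [Jopt]
    apply Finset.sum_nonneg
    intro d _
    apply mul_nonneg (hs d)
    split
    · exact ih _
    · have h0 : (0:ℝ) ≤ sInf {c : ℝ | ∃ j, 2 ≤ j ∧ j ≤ V ∧ rotd d x j = true ∧
          c = Jopt V s τ (evictState d j x)} := by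
        apply Real.sInf_nonneg
        rintro c ⟨j, -, -, -, rfl⟩
        exact ih _
      linarith

lemma sum_pair_le {S : Finset ℕ} {F G : ℕ → ℝ} {p q : ℕ} (hp : p ∈ S) (hq : q ∈ S) (hne : p ≠ q)
    (hrest : ∀ d ∈ S, d ≠ p → d ≠ q → F d ≤ G d) (hpair : F p + F q ≤ G p + G q) :
    ∑ d ∈ S, F d ≤ ∑ d ∈ S, G d := by
  classical
  have hq' : q ∈ S.erase p := Finset.mem_erase.mpr ⟨hne.symm, hq⟩
  rw [← Finset.add_sum_erase _ F hp, ← Finset.add_sum_erase _ G hp,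
      ← Finset.add_sum_erase _ F hq', ← Finset.add_sum_erase _ G hq']
  have hrest' : ∑ d ∈ (S.erase p).erase q, F d ≤ ∑ d ∈ (S.erase p).erase q, G d := by
    apply Finset.sum_le_sum
    intro d hd
    have h1 := Finset.mem_erase.mp hd
    have h2 := Finset.mem_erase.mp h1.2
    exact hrest d h2.2 h2.1 h1.1
  linarith

lemma rot_pair {V p q d : ℕ} {y z : ℕ → Bool}
    (hp2 : 2 ≤ p) (hpq : p < q) (hqV : q ≤ V)
    (hyp : y p = true) (hyq : y q = false) (hzp : z p = false) (hzq : z q = true)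
    (hagree : ∀ r, r ≠ p → r ≠ q → y r = z r) (htail : ∀ r, q < r → y r = false)
    (hd1 : 1 ≤ d) (hdV : d ≤ V) (hdp : d ≠ p) (hdq : d ≠ q) :
    ∃ p' q', 2 ≤ p' ∧ p' < q' ∧ q' ≤ V ∧
      rotd d y p' = true ∧ rotd d y q' = false ∧ rotd d z p' = false ∧ rotd d z q' = true ∧
      (∀ r, r ≠ p' → r ≠ q' → rotd d y r = rotd d z r) ∧
      (∀ r, q' < r → rotd d y r = false) := by
  by_cases hdp' : d < p
  · refine ⟨p, q, hp2, hpq, hqV, ?_, ?_, ?_, ?_, ?_, ?_⟩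
    · rw [rotd_high hd1 hdp']; exact hyp
    · rw [rotd_high hd1 (by omega)]; exact hyq
    · rw [rotd_high hd1 hdp']; exact hzp
    · rw [rotd_high hd1 (by omega)]; exact hzq
    · intro r hrp hrq
      rcases eq_or_ne r 1 with rfl | hr1
      · rw [rotd_one, rotd_one]; exact hagree d hdp hdq
      · by_cases hrd : r ≤ d
        · rw [rotd_mid hr1 hrd, rotd_mid hr1 hrd]
          exact hagree (r-1) (by omega) (by omega)
        · rw [rotd_high hd1 (by omega), rotd_high hd1 (by omega)]
          exact hagree r hrp hrq
    · intro r hr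
      rw [rotd_high hd1 (by omega)]; exact htail r hr
  · by_cases hdq' : d < q
    · have hpd : p < d := by omega
      refine ⟨p+1, q, by omega, by omega, hqV, ?_, ?_, ?_, ?_, ?_, ?_⟩
      · rw [rotd_mid (by omega) (by omega)]; simpa using hyp
      · rw [rotd_high hd1 hdq']; exact hyq
      · rw [rotd_mid (by omega) (by omega)]; simpa using hzp
      · rw [rotd_high hd1 hdq']; exact hzq
      · intro r hrp hrq
        rcases eq_or_ne r 1 with rfl | hr1
        · rw [rotd_one, rotd_one]; exact hagree d hdp hdq
        · by_cases hrd : r ≤ d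
          · rw [rotd_mid hr1 hrd, rotd_mid hr1 hrd]
            exact hagree (r-1) (by omega) (by omega)
          · rw [rotd_high hd1 (by omega), rotd_high hd1 (by omega)]
            exact hagree r (by omega) hrq
      · intro r hr
        rw [rotd_high hd1 (by omega)]; exact htail r hr
    · have hqd : q < d := by omega
      refine ⟨p+1, q+1, by omega, by omega, by omega, ?_, ?_, ?_, ?_, ?_, ?_⟩
      · rw [rotd_mid (by omega) (by omega)]; simpa using hyp
      · rw [rotd_mid (by omega) (by omega)]; simpa using hyq
      · rw [rotd_mid (by omega) (by omega)]; simpa using hzp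
      · rw [rotd_mid (by omega) (by omega)]; simpa using hzq
      · intro r hrp hrq
        rcases eq_or_ne r 1 with rfl | hr1
        · rw [rotd_one, rotd_one]; exact hagree d hdp hdq
        · by_cases hrd : r ≤ d
          · rw [rotd_mid hr1 hrd, rotd_mid hr1 hrd]
            exact hagree (r-1) (by omega) (by omega)
          · rw [rotd_high hd1 (by omega), rotd_high hd1 (by omega)]
            exact hagree r (by omega) (by omega)
      · intro r hr
        by_cases hrd : r ≤ d
        · rw [rotd_mid (by omega) hrd]; exact htail (r-1) (by omega)
        · rw [rotd_high hd1 (by omega)]; exact htail r (by omega)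

lemma evict_opt {V : ℕ} {s : ℕ → ℝ} {τ : ℕ}
    (ih : ∀ y z : ℕ → Bool, CritPair V y z → Jopt V s τ y ≤ Jopt V s τ z)
    {d m : ℕ} (x : ℕ → Bool) (hm2 : 2 ≤ m) (hmV : m ≤ V)
    (hmt : rotd d x m = true) (htail : ∀ r, m < r → rotd d x r = false) :
    ∀ j, 2 ≤ j → j ≤ V → rotd d x j = true →
      Jopt V s τ (evictState d m x) ≤ Jopt V s τ (evictState d j x) := by
  intro j hj2 hjV hjt
  rcases eq_or_ne j m with rfl | hne
  · exact le_refl _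
  have hjm : j < m := by
    by_contra h
    push_neg at h
    rw [htail j (by omega)] at hjt
    exact absurd hjt (by simp)
  apply ih
  refine ⟨j, m, hj2, hjm, hmV, evict_one _ _ _, evict_one _ _ _, ?_, ?_, ?_, ?_, ?_, ?_⟩
  · rw [evict_other (by omega) hne]; exact hjt
  · exact evict_self (by omega) _ _
  · exact evict_self (by omega) _ _
  · rw [evict_other (by omega) (by omega)]; exact hmt
  · intro r hrj hrm
    rcases eq_or_ne r 1 with rfl | hr1
    · rw [evict_one, evict_one]
    · rw [evict_other hr1 hrm, evict_other hr1 hrj]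
  · intro r hr
    rw [evict_other (by omega) (by omega)]; exact htail r hr

lemma critMono (V : ℕ) (s : ℕ → ℝ) (hs : ∀ i, 0 ≤ s i)
    (hmono : ∀ j, 1 ≤ j → j < V → s (j + 1) ≤ s j) :
    ∀ τ (y z : ℕ → Bool), CritPair V y z → Jopt V s τ y ≤ Jopt V s τ z := by
  have santi : ∀ k a : ℕ, 1 ≤ a → a + k ≤ V → s (a + k) ≤ s a := by
    intro k
    induction k with
    | zero => intro a _ _; simp
    | succ n ihk =>
      intro a h1 hV
      have h3 : s (a + n + 1) ≤ s (a + n) := hmono _ (by omega) (by omega)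
      have h2 := ihk a h1 (by omega)
      have he : a + (n + 1) = a + n + 1 := rfl
      rw [he]
      exact h3.trans h2
  intro τ
  induction τ with
  | zero => intro y z _; simp [Jopt]
  | succ τ ih =>
    rintro y z ⟨p, q, hp2, hpq, hqV, hy1, hz1, hyp, hyq, hzp, hzq, hagree, htail⟩
    have bddy : ∀ (d : ℕ) (x : ℕ → Bool), BddBelow {c : ℝ | ∃ j, 2 ≤ j ∧ j ≤ V ∧
        rotd d x j = true ∧ c = Jopt V s τ (evictState d j x)} :=
      fun d x => ⟨0, by rintro c ⟨j, -, -, -, rfl⟩; exact jopt_nonneg V s hs τ _⟩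
    rw [Jopt, Jopt]
    apply sum_pair_le (p := p) (q := q)
      (by simp only [Finset.mem_Icc]; omega) (by simp only [Finset.mem_Icc]; omega) (by omega)
    · -- generic d ≠ p, q
      intro d hd hdp hdq
      simp only [Finset.mem_Icc] at hd
      have hyzd : y d = z d := hagree d hdp hdq
      obtain ⟨p', q', hp'2, hp'q', hq'V, hyp', hyq', hzp', hzq', hagree', htaily'⟩ :=
        rot_pair hp2 hpq hqV hyp hyq hzp hzq hagree htail hd.1 hd.2 hdp hdq
      have htailz' : ∀ r, q' < r → rotd d z r = false := fun r hr => by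
        rw [← hagree' r (by omega) (by omega)]; exact htaily' r hr
      refine mul_le_mul_of_nonneg_left ?_ (hs d)
      rw [hyzd]
      cases hzd : z d with
      | true =>
        rw [if_pos rfl, if_pos rfl]
        apply ih
        refine ⟨p', q', hp'2, hp'q', hq'V, ?_, ?_, hyp', hyq', hzp', hzq', hagree', htaily'⟩
        · rw [rotd_one, hyzd]; exact hzd
        · rw [rotd_one]; exact hzd
      | false =>
        rw [if_neg (by simp), if_neg (by simp)]
        apply add_le_add_right
        refine le_csInf ⟨Jopt V s τ (evictState d q' z), q', by omega, hq'V, hzq', rfl⟩ ?_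
        rintro c ⟨j, hj2, hjV, hjt, rfl⟩
        by_cases hjq : j = q'
        · subst hjq
          have heq : evictState d p' y = evictState d j z := by
            funext i
            rcases eq_or_ne i 1 with rfl | hi1
            · rw [evict_one, evict_one]
            rcases eq_or_ne i p' with rfl | hip
            · rw [evict_self (by omega) , evict_other hi1 (by omega), hzp']
            rcases eq_or_ne i j with rfl | hij
            · rw [evict_other hi1 hip, evict_self hi1, hyq']
            · rw [evict_other hi1 hip, evict_other hi1 hij]; exact hagree' i hip hij
          calc sInf _ ≤ Jopt V s τ (evictState d p' y) :=
                csInf_le (bddy d y) ⟨p', hp'2, by omega, hyp', rfl⟩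
            _ = Jopt V s τ (evictState d j z) := congrArg (Jopt V s τ) heq
        · have hjq' : j < q' := by
            by_contra h
            push_neg at h
            rw [htailz' j (by omega)] at hjt
            exact absurd hjt (by simp)
          have hjp' : j ≠ p' := by
            rintro rfl
            rw [hzp'] at hjt
            exact absurd hjt (by simp)
          have hyjt : rotd d y j = true := by rw [hagree' j hjp' hjq]; exact hjt
          calc sInf _ ≤ Jopt V s τ (evictState d j y) :=
                csInf_le (bddy d y) ⟨j, hj2, hjV, hyjt, rfl⟩
            _ ≤ Jopt V s τ (evictState d j z) := by
                apply ih
                refine ⟨p', q', hp'2, hp'q', hq'V, evict_one _ _ _, evict_one _ _ _,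
                  ?_, ?_, ?_, ?_, ?_, ?_⟩
                · rw [evict_other (by omega) (Ne.symm hjp')]; exact hyp'
                · rw [evict_other (by omega) (by omega)]; exact hyq'
                · rw [evict_other (by omega) (Ne.symm hjp')]; exact hzp'
                · rw [evict_other (by omega) (by omega)]; exact hzq'
                · intro r hrp hrq
                  rcases eq_or_ne r 1 with rfl | hr1
                  · rw [evict_one, evict_one]
                  rcases eq_or_ne r j with rfl | hrj
                  · rw [evict_self hr1, evict_self hr1]
                  · rw [evict_other hr1 hrj, evict_other hr1 hrj]; exact hagree' r hrp hrq
                · intro r hr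
                  rw [evict_other (by omega) (by omega)]
                  exact htaily' r hr
    · -- the pair p, q
      have hp1 : 1 ≤ p := by omega
      have hq1 : 1 ≤ q := by omega
      rw [if_pos hyp, if_neg (by simp [hyq]), if_neg (by simp [hzp]), if_pos hzq]
      have E1 : rotd p y = evictState p q z := by
        funext i
        rcases eq_or_ne i 1 with rfl | hi1
        · rw [rotd_one, evict_one, hyp]
        rcases eq_or_ne i q with rfl | hiq
        · rw [rotd_high hp1 hpq, evict_self (by omega), hyq]
        · rw [evict_other hi1 hiq]
          by_cases hip : i ≤ p
          · rw [rotd_mid hi1 hip, rotd_mid hi1 hip]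
            exact hagree (i-1) (by omega) (by omega)
          · rw [rotd_high hp1 (by omega), rotd_high hp1 (by omega)]
            exact hagree i (by omega) hiq
      have E2 : evictState q (p+1) y = rotd q z := by
        funext i
        rcases eq_or_ne i 1 with rfl | hi1
        · rw [evict_one, rotd_one, hzq]
        rcases eq_or_ne i (p+1) with rfl | hip
        · rw [evict_self (by omega) _ _, rotd_mid (by omega) (by omega)]
          exact hzp.symm
        · rw [evict_other hi1 hip]
          by_cases hiq : i ≤ q
          · rw [rotd_mid hi1 hiq, rotd_mid hi1 hiq]
            exact hagree (i-1) (by omega) (by omega)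
          · rw [rotd_high hq1 (by omega), rotd_high hq1 (by omega)]
            exact hagree i (by omega) (by omega)
      have hrotzq : rotd p z q = true := by rw [rotd_high hp1 hpq]; exact hzq
      have htailC : ∀ r, q < r → rotd p z r = false := fun r hr => by
        rw [rotd_high hp1 (by omega), ← hagree r (by omega) (by omega)]
        exact htail r hr
      have hA : Jopt V s τ (rotd p y) ≤
          sInf {c : ℝ | ∃ j, 2 ≤ j ∧ j ≤ V ∧ rotd p z j = true ∧
            c = Jopt V s τ (evictState p j z)} := by
        rw [E1]
        refine le_csInf ⟨Jopt V s τ (evictState p q z), q, by omega, hqV, hrotzq, rfl⟩ ?_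
        rintro c ⟨j, hj2, hjV, hjt, rfl⟩
        exact evict_opt ih z (by omega) hqV hrotzq htailC j hj2 hjV hjt
      have hB : sInf {c : ℝ | ∃ j, 2 ≤ j ∧ j ≤ V ∧ rotd q y j = true ∧
            c = Jopt V s τ (evictState q j y)} ≤ Jopt V s τ (rotd q z) := by
        refine csInf_le (bddy q y) ⟨p+1, by omega, by omega, ?_, ?_⟩
        · rw [rotd_mid (by omega) (by omega)]; simpa using hyp
        · rw [E2]
      have hsq : s q ≤ s p := by
        obtain ⟨k, rfl⟩ := Nat.exists_eq_add_of_le (le_of_lt hpq)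
        exact santi k p hp1 hqV
      have h1 := mul_le_mul_of_nonneg_left hA (hs p)
      have h2 := mul_le_mul_of_nonneg_left hB (hs q)
      nlinarith [h1, h2, hsq]

lemma sInf_evict_eq {V : ℕ} {s : ℕ → ℝ} (hs : ∀ i, 0 ≤ s i) {τ : ℕ}
    (ih : ∀ y z : ℕ → Bool, CritPair V y z → Jopt V s τ y ≤ Jopt V s τ z)
    {d m : ℕ} (x : ℕ → Bool) (hm2 : 2 ≤ m) (hmV : m ≤ V)
    (hmt : rotd d x m = true) (htail : ∀ r, m < r → rotd d x r = false) :
    sInf {c : ℝ | ∃ j, 2 ≤ j ∧ j ≤ V ∧ rotd d x j = true ∧ c = Jopt V s τ (evictState d j x)}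
      = Jopt V s τ (evictState d m x) := by
  apply le_antisymm
  · exact csInf_le ⟨0, by rintro c ⟨j, -, -, -, rfl⟩; exact jopt_nonneg V s hs τ _⟩
      ⟨m, hm2, hmV, hmt, rfl⟩
  · refine le_csInf ⟨Jopt V s τ (evictState d m x), m, hm2, hmV, hmt, rfl⟩ ?_
    rintro c ⟨j, hj2, hjV, hjt, rfl⟩
    exact evict_opt ih x hm2 hmV hmt htail j hj2 hjV hjt

lemma lru_eq (V : ℕ) (s : ℕ → ℝ) (hs : ∀ i, 0 ≤ s i)
    (hmono : ∀ j, 1 ≤ j → j < V → s (j + 1) ≤ s j) :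
    ∀ τ (x : ℕ → Bool), x 1 = true → (∀ j, x j = true → 1 ≤ j ∧ j ≤ V) →
      Jlru V s τ x = Jopt V s τ x := by
  intro τ
  induction τ with
  | zero => intro x _ _; simp [Jlru, Jopt]
  | succ τ ih =>
    intro x hx1 hsupp
    rw [Jlru, Jopt]
    apply Finset.sum_congr rfl
    intro d hd
    simp only [Finset.mem_Icc] at hd
    refine congrArg (fun t => s d * t) ?_
    by_cases hxd : x d = true
    · -- hit
      have hstep : lruStep V d x = rotd d x := by simp [lruStep, hxd]
      rw [if_pos hxd, if_pos hxd, hstep, zero_add]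
      apply ih
      · rw [rotd_one]; exact hxd
      · intro j hj
        rcases eq_or_ne j 1 with rfl | hj1
        · exact ⟨le_refl 1, by omega⟩
        · by_cases hjd : j ≤ d
          · rw [rotd_mid hj1 hjd] at hj
            have := hsupp _ hj
            exact ⟨by omega, by omega⟩
          · rw [rotd_high (by omega) (by omega)] at hj
            exact hsupp _ hj
    · -- miss
      have hxd' : x d = false := by revert hxd; cases x d <;> simp
      have hd1 : d ≠ 1 := by
        rintro rfl
        rw [hx1] at hxd'
        exact absurd hxd' (by simp)
      have hd2 : 2 ≤ d := by omega
      have h2F : 2 ∈ (Finset.Icc 2 V).filter (fun i => rotd d x i = true) := by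
        refine Finset.mem_filter.mpr ⟨Finset.mem_Icc.mpr ⟨le_refl 2, by omega⟩, ?_⟩
        rw [rotd_mid (by omega) hd2]
        exact hx1
      obtain ⟨m, hm⟩ := Finset.max_of_nonempty ⟨2, h2F⟩
      have hmm : m ∈ (Finset.Icc 2 V).filter (fun i => rotd d x i = true) :=
        Finset.mem_of_max hm
      have hmIcc := Finset.mem_Icc.mp (Finset.mem_filter.mp hmm).1
      have hmt : rotd d x m = true := (Finset.mem_filter.mp hmm).2
      have htailm : ∀ r, m < r → rotd d x r = false := by
        intro r hr
        cases hrr : rotd d x r with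
        | false => rfl
        | true =>
          exfalso
          by_cases hrV : r ≤ V
          · have hrF : r ∈ (Finset.Icc 2 V).filter (fun i => rotd d x i = true) :=
              Finset.mem_filter.mpr ⟨Finset.mem_Icc.mpr ⟨by omega, hrV⟩, hrr⟩
            have := Finset.le_max_of_eq hrF hm
            omega
          · by_cases hrd : r ≤ d
            · rw [rotd_mid (by omega) hrd] at hrr
              have := hsupp _ hrr
              omega
            · rw [rotd_high (by omega) (by omega)] at hrr
              have := hsupp _ hrr
              omega
      have hunbot : WithBot.unbotD 0 ((Finset.Icc 2 V).filter (fun i => rotd d x i = true)).max = m := by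
        rw [hm]; rfl
      have hstep : lruStep V d x = evictState d m x := by
        funext j
        simp only [lruStep, evictState, hxd', hunbot, Bool.false_eq_true, if_false]
      have hvalid : ∀ j, evictState d m x j = true → 1 ≤ j ∧ j ≤ V := by
        intro j hj
        rcases eq_or_ne j 1 with rfl | hj1
        · exact ⟨le_refl 1, by omega⟩
        rcases eq_or_ne j m with rfl | hjm
        · rw [evict_self hj1] at hj
          exact absurd hj (by simp)
        · rw [evict_other hj1 hjm] at hj
          by_cases hjd : j ≤ d
          · rw [rotd_mid hj1 hjd] at hj
            have := hsupp _ hj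
            exact ⟨by omega, by omega⟩
          · rw [rotd_high (by omega) (by omega)] at hj
            exact hsupp _ hj
      rw [if_neg hxd, if_neg hxd, hstep,
        ih (evictState d m x) (evict_one _ _ _) hvalid,
        sInf_evict_eq hs (critMono V s hs hmono τ) x hmIcc.1 hmIcc.2 hmt htailm]

/-- If the stack-depth distribution `s` is non-increasing, then LRU is optimal for
every finite horizon `τ ≥ 1` and every initial buffer content; moreover for every
critical pair `y ≤_c z` the optimal costs satisfy `J*_τ(y) ≤ J*_τ(z)`. -/
theorem stmt14 (V : ℕ) (s : ℕ → ℝ) (hs : ∀ i, 0 ≤ s i)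
    (hsum : ∑ j ∈ Finset.Icc 1 V, s j = 1)
    (hmono : ∀ j, 1 ≤ j → j < V → s (j + 1) ≤ s j) :
    (∀ τ, 1 ≤ τ → ∀ x : ℕ → Bool, x 1 = true →
      (∀ j, x j = true → 1 ≤ j ∧ j ≤ V) → Jlru V s τ x = Jopt V s τ x)
    ∧ (∀ τ (y z : ℕ → Bool), CritPair V y z → Jopt V s τ y ≤ Jopt V s τ z) := by
  exact ⟨fun τ _ x hx1 hsupp => lru_eq V s hs hmono τ x hx1 hsupp,
    critMono V s hs hmono⟩
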